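/- Let F = {id_{i,j} : 0 < i ≤ j} be the minimal function domain and let Γ be a maximal consistent set in SLKVF + CHOO + EQU. Define the equivalence relation c ∼ d ⟺ Kf({c},d) ∈ Γ on Q (an equivalence by PROJ, EQU, TRAN), with [c] its classes and [Γ_Kv] = {[c] : Kv(c) ∈ Γ}. Suppose u, v : Q/∼ → G are injections such that u([c]) = v([c]) ⟺ [c] ∈ [Γ_Kv], and define V_p(t,d) = t([d]) for t ∈ {u,v}. Then for any d ∈ Q and finite C ⊆ Q: (1) if Kv(d) ∈ Γ there is x ∈ G with V_p(t,d) = x for all t ∈ {u,v}; (2) if Kv(d) ∉ Γ then V_p(u,d) ≠ V_p(v,d); (3) if Kf(C,d) ∈ Γ there is f ∈ F with f(V_p(t,C)) = V_p(t,d) for both t ∈ {u,v}; (4) if Kf(C,d) ∉ Γ then for every f ∈ F there is t ∈ {u,v} with f(V_p(t,C)) ≠ V_p(t,d). -/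

import Mathlib

open scoped Classical

/-! Single-agent language `LKVF` with operators `Kv`, `Kf` and `K`. -/

inductive Formula (P Q : Type) : Type where
  | top : Formula P Q
  | atom : P → Formula P Q
  | Kv : Q → Formula P Q
  | Kf : Finset Q → Q → Formula P Q
  | and : Formula P Q → Formula P Q → Formula P Q
  | not : Formula P Q → Formula P Q
  | K : Formula P Q → Formula P Q

namespace Formula

variable {P Q : Type}

/-- Material implication, defined from `and` and `not`. -/
def imp (φ ψ : Formula P Q) : Formula P Q := Formula.not (Formula.and φ (Formula.not ψ))

/-- Falsum. -/
def bot : Formula P Q := Formula.not Formula.top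

/-- Disjunction. -/
def or (φ ψ : Formula P Q) : Formula P Q :=
  Formula.not (Formula.and (Formula.not φ) (Formula.not ψ))

end Formula

variable {P Q G : Type}

/-- Finite conjunction of a list of formulas. -/
def conj : List (Formula P Q) → Formula P Q
  | [] => Formula.top
  | φ :: l => Formula.and φ (conj l)

/-- Finite disjunction of a list of formulas. -/
def disj : List (Formula P Q) → Formula P Q
  | [] => Formula.bot
  | φ :: l => Formula.or φ (disj l)

/-- `φ` is a propositional tautology: every Boolean valuation commuting with the
Boolean connectives makes it true. -/
def IsTaut (φ : Formula P Q) : Prop :=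
  ∀ v : Formula P Q → Bool,
    v Formula.top = true →
    (∀ α β, v (Formula.and α β) = (v α && v β)) →
    (∀ α, v (Formula.not α) = (! v α)) →
    v φ = true

section Axioms

variable (P Q : Type) [LinearOrder Q]

/-- `⋀_{d ∈ D} Kf(C,d)`. -/
def finConjKf (C D : Finset Q) : Formula P Q :=
  conj ((D.sort (· ≤ ·)).map fun d => Formula.Kf C d)

/-- `⋀_{c ∈ C} Kv(c)`. -/
def finConjKv (C : Finset Q) : Formula P Q :=
  conj ((C.sort (· ≤ ·)).map fun c => Formula.Kv c)

/-- The axioms of the base system `SLKVF`. -/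
inductive SLKVF : Formula P Q → Prop where
  | taut {φ : Formula P Q} : IsTaut φ → SLKVF φ
  | axK (φ ψ : Formula P Q) :
      SLKVF (Formula.imp (Formula.K (Formula.imp φ ψ))
        (Formula.imp (Formula.K φ) (Formula.K ψ)))
  | axT (φ : Formula P Q) : SLKVF (Formula.imp (Formula.K φ) φ)
  | ax4 (φ : Formula P Q) : SLKVF (Formula.imp (Formula.K φ) (Formula.K (Formula.K φ)))
  | ax5 (φ : Formula P Q) :
      SLKVF (Formula.imp (Formula.not (Formula.K φ)) (Formula.K (Formula.not (Formula.K φ))))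
  | kv4 (d : Q) : SLKVF (Formula.imp (Formula.Kv d) (Formula.K (Formula.Kv d)))
  | kv5 (d : Q) :
      SLKVF (Formula.imp (Formula.not (Formula.Kv d)) (Formula.K (Formula.not (Formula.Kv d))))
  | kf4 (C : Finset Q) (d : Q) :
      SLKVF (Formula.imp (Formula.Kf C d) (Formula.K (Formula.Kf C d)))
  | kf5 (C : Finset Q) (d : Q) :
      SLKVF (Formula.imp (Formula.not (Formula.Kf C d))
        (Formula.K (Formula.not (Formula.Kf C d))))
  | proj {C : Finset Q} {c : Q} : c ∈ C → SLKVF (Formula.Kf C c)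
  | tran (C D : Finset Q) (e : Q) :
      SLKVF (Formula.imp (Formula.and (finConjKf P Q C D) (Formula.Kf D e)) (Formula.Kf C e))
  | vf (C : Finset Q) (d : Q) :
      SLKVF (Formula.imp (Formula.and (finConjKv P Q C) (Formula.Kf C d)) (Formula.Kv d))

end Axioms

/-- Provability from an axiom set `Ax` with rules modus ponens and necessitation. -/
inductive Prov (Ax : Formula P Q → Prop) : Formula P Q → Prop where
  | ax {φ : Formula P Q} : Ax φ → Prov Ax φ
  | mp {φ ψ : Formula P Q} : Prov Ax (Formula.imp φ ψ) → Prov Ax φ → Prov Ax ψ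
  | nec {φ : Formula P Q} : Prov Ax φ → Prov Ax (Formula.K φ)

/-- `Γ` is consistent: no finite conjunction of its members proves `⊥`. -/
def Consistent (Ax : Formula P Q → Prop) (Γ : Set (Formula P Q)) : Prop :=
  ¬ ∃ L : List (Formula P Q), (∀ φ ∈ L, φ ∈ Γ) ∧ Prov Ax (Formula.imp (conj L) Formula.bot)

/-- `Γ` is maximal consistent. -/
def MCS (Ax : Formula P Q → Prop) (Γ : Set (Formula P Q)) : Prop :=
  Consistent Ax Γ ∧ ∀ φ : Formula P Q, φ ∈ Γ ∨ Formula.not φ ∈ Γ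

/-! Function domains: sets of finitary functions on the value domain `G`. -/

/-- A function domain on `G`: a set of `n`-ary functions on `G` for various `n`. -/
abbrev FnDom (G : Type) : Type := Set (Σ n : ℕ, (Fin n → G) → G)

/-- `F` contains all projection functions `id_{i,j}` for `0 < i ≤ j`. -/
def hasProjections (F : FnDom G) : Prop :=
  ∀ (j : ℕ) (k : Fin j), (⟨j, fun x => x k⟩ : Σ n : ℕ, (Fin n → G) → G) ∈ F

/-- `F` is closed under composition: for an `n`-ary `f ∈ F` with `n ≥ 1` and
`m`-ary `g₁, …, gₙ ∈ F`, the composition `f(g₁(·),…,gₙ(·))` is in `F`. -/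
def closedComp (F : FnDom G) : Prop :=
  ∀ (n m : ℕ), 0 < n → ∀ f : (Fin n → G) → G,
    (⟨n, f⟩ : Σ n : ℕ, (Fin n → G) → G) ∈ F →
    ∀ g : Fin n → (Fin m → G) → G,
      (∀ k, (⟨m, g k⟩ : Σ n : ℕ, (Fin n → G) → G) ∈ F) →
      (⟨m, fun x => f fun k => g k x⟩ : Σ n : ℕ, (Fin n → G) → G) ∈ F

/-- The tuple of values of the variables of the finite set `C`, in the fixed
(increasing) order of its elements. -/
def tupleV [LinearOrder Q] (v : Q → G) (C : Finset Q) : Fin C.card → G :=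
  fun k => v ((C.sort (· ≤ ·)).get (Fin.cast (Finset.length_sort (s := C) (· ≤ ·)).symm k))

/-- A model of `LKVF`: worlds, an assignment of propositional letters and an
assignment of values to variables. -/
structure Model (P Q G : Type) : Type 1 where
  W : Type
  U : W → P → Prop
  V : W → Q → G

variable [LinearOrder Q]

/-- Truth of a formula at a world of a model, relative to a function domain `F`. -/
def sat (F : FnDom G) (M : Model P Q G) (w : M.W) : Formula P Q → Prop
  | Formula.top => True
  | Formula.atom p => M.U w p
  | Formula.Kv d => ∃ x : G, ∀ w' : M.W, M.V w' d = x
  | Formula.Kf C d =>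
      ∃ f : (Fin C.card → G) → G,
        (⟨C.card, f⟩ : Σ n : ℕ, (Fin n → G) → G) ∈ F ∧
        ∀ w' : M.W, M.V w' d = f (tupleV (M.V w') C)
  | Formula.and φ ψ => sat F M w φ ∧ sat F M w ψ
  | Formula.not φ => ¬ sat F M w φ
  | Formula.K φ => ∀ w' : M.W, sat F M w' φ

/-- Validity over all models built on the value domain `G` and function domain `F`. -/
def Valid (F : FnDom G) (φ : Formula P Q) : Prop :=
  ∀ (M : Model P Q G) (w : M.W), sat F M w φ

/-! STATEMENT 9: properties of the two valuations `u`, `v` built from a maximal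
consistent set in `SLKVF + CHOO + EQU`, over the minimal function domain. -/

/-- The minimal function domain: the projection functions `id_{i,j}`, `0 < i ≤ j`. -/
def Fmin (G : Type) : FnDom G :=
  {p : Σ n : ℕ, (Fin n → G) → G | ∃ k : Fin p.1, p.2 = fun x => x k}

/-- `CHOO : Kf(C,d) → ⋁_{c ∈ C} Kf({c},d)`. -/
def chooF (P Q : Type) [LinearOrder Q] (C : Finset Q) (d : Q) : Formula P Q :=
  Formula.imp (Formula.Kf C d)
    (disj ((C.sort (· ≤ ·)).map fun c => Formula.Kf ({c} : Finset Q) d))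

/-- `EQU : Kf({c},d) → Kf({d},c)`. -/
def equF (P Q : Type) (c d : Q) : Formula P Q :=
  Formula.imp (Formula.Kf ({c} : Finset Q) d) (Formula.Kf ({d} : Finset Q) c)

/-- The axiom system `SLKVF + CHOO + EQU`. -/
def AxMin (P Q : Type) [LinearOrder Q] : Formula P Q → Prop := fun φ =>
  SLKVF P Q φ ∨ (∃ (C : Finset Q) (d : Q), φ = chooF P Q C d) ∨
    (∃ c d : Q, φ = equF P Q c d)

section Helpers9

variable {P Q : Type} [LinearOrder Q]

lemma provTaut9 {φ : Formula P Q} (h : IsTaut φ) : Prov (AxMin P Q) φ :=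
  Prov.ax (Or.inl (SLKVF.taut h))

lemma provSL9 {φ : Formula P Q} (h : SLKVF P Q φ) : Prov (AxMin P Q) φ :=
  Prov.ax (Or.inl h)

lemma mcs_key9 {Γ : Set (Formula P Q)} (hΓ : MCS (AxMin P Q) Γ)
    (L : List (Formula P Q)) (hL : ∀ φ ∈ L, φ ∈ Γ) {φ : Formula P Q}
    (hp : Prov (AxMin P Q) (Formula.imp (conj L) φ)) : φ ∈ Γ := by
  rcases hΓ.2 φ with h | h
  · exact h
  · exfalso; apply hΓ.1
    refine ⟨Formula.not φ :: L, ?_, ?_⟩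
    · intro ψ hψ
      rcases List.mem_cons.1 hψ with rfl | hm
      · exact h
      · exact hL _ hm
    · refine Prov.mp (provTaut9 ?_) hp
      intro v h1 h2 h3
      simp only [Formula.imp, Formula.bot, conj, h2, h3, h1]
      cases h4 : v (conj L) <;> cases h5 : v φ <;> simp [h4, h5]

lemma thm_mem9 {Γ : Set (Formula P Q)} (hΓ : MCS (AxMin P Q) Γ)
    {φ : Formula P Q} (hp : Prov (AxMin P Q) φ) : φ ∈ Γ := by
  refine mcs_key9 hΓ [] (by simp) (Prov.mp (provTaut9 ?_) hp)
  intro v h1 h2 h3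
  simp only [Formula.imp, conj, h2, h3, h1]
  cases h4 : v φ <;> simp [h4]

lemma mp_mem9 {Γ : Set (Formula P Q)} (hΓ : MCS (AxMin P Q) Γ)
    {φ ψ : Formula P Q} (h1 : Formula.imp φ ψ ∈ Γ) (h2 : φ ∈ Γ) : ψ ∈ Γ := by
  refine mcs_key9 hΓ [Formula.imp φ ψ, φ] ?_ (provTaut9 ?_)
  · intro χ hχ; simp at hχ; rcases hχ with rfl | rfl <;> assumption
  · intro v ht ha hn
    simp only [Formula.imp, conj, ha, hn, ht]
    cases h4 : v φ <;> cases h5 : v ψ <;> simp [h4, h5]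

lemma and_mem9 {Γ : Set (Formula P Q)} (hΓ : MCS (AxMin P Q) Γ)
    {φ ψ : Formula P Q} (h1 : φ ∈ Γ) (h2 : ψ ∈ Γ) : Formula.and φ ψ ∈ Γ := by
  refine mcs_key9 hΓ [φ, ψ] ?_ (provTaut9 ?_)
  · intro χ hχ; simp at hχ; rcases hχ with rfl | rfl <;> assumption
  · intro v ht ha hn
    simp only [Formula.imp, conj, ha, hn, ht]
    cases h4 : v φ <;> cases h5 : v ψ <;> simp [h4, h5]

lemma top_mem9 {Γ : Set (Formula P Q)} (hΓ : MCS (AxMin P Q) Γ) :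
    (Formula.top : Formula P Q) ∈ Γ :=
  thm_mem9 hΓ (provTaut9 fun _ h1 _ _ => h1)

lemma bot_not_mem9 {Γ : Set (Formula P Q)} (hΓ : MCS (AxMin P Q) Γ) :
    (Formula.bot : Formula P Q) ∉ Γ := by
  intro hb
  apply hΓ.1
  refine ⟨[Formula.bot], by simpa using hb, provTaut9 ?_⟩
  intro v ht ha hn
  simp only [Formula.imp, Formula.bot, conj, ha, hn, ht]; rfl

lemma or_elim_mem9 {Γ : Set (Formula P Q)} (hΓ : MCS (AxMin P Q) Γ)
    {φ ψ : Formula P Q} (h : Formula.or φ ψ ∈ Γ) : φ ∈ Γ ∨ ψ ∈ Γ := by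
  rcases hΓ.2 φ with hφ | hφ
  · exact Or.inl hφ
  · refine Or.inr (mcs_key9 hΓ [Formula.or φ ψ, Formula.not φ] ?_ (provTaut9 ?_))
    · intro χ hχ; simp at hχ; rcases hχ with rfl | rfl <;> assumption
    · intro v ht ha hn
      simp only [Formula.imp, Formula.or, conj, ha, hn, ht]
      cases h4 : v φ <;> cases h5 : v ψ <;> simp [h4, h5]

lemma disj_mem9 {Γ : Set (Formula P Q)} (hΓ : MCS (AxMin P Q) Γ) :
    ∀ L : List (Formula P Q), disj L ∈ Γ → ∃ φ ∈ L, φ ∈ Γ := by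
  intro L
  induction L with
  | nil => intro h; exact absurd h (bot_not_mem9 hΓ)
  | cons φ L ih =>
    intro h
    rcases or_elim_mem9 hΓ h with h | h
    · exact ⟨φ, List.mem_cons_self, h⟩
    · rcases ih h with ⟨ψ, hψ, hψΓ⟩
      exact ⟨ψ, List.mem_cons_of_mem _ hψ, hψΓ⟩

lemma kv_of9 {Γ : Set (Formula P Q)} (hΓ : MCS (AxMin P Q) Γ) {c d : Q}
    (h1 : Formula.Kv c ∈ Γ) (h2 : Formula.Kf ({c} : Finset Q) d ∈ Γ) :
    (Formula.Kv d : Formula P Q) ∈ Γ := by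
  have hvf := thm_mem9 hΓ (provSL9 (SLKVF.vf ({c} : Finset Q) d))
  have hconj : finConjKv P Q ({c} : Finset Q) = Formula.and (Formula.Kv c) Formula.top := by
    simp [finConjKv, Finset.sort_singleton, conj]
  rw [hconj] at hvf
  exact mp_mem9 hΓ hvf (and_mem9 hΓ (and_mem9 hΓ h1 (top_mem9 hΓ)) h2)

lemma kf_tran9 {Γ : Set (Formula P Q)} (hΓ : MCS (AxMin P Q) Γ) {C : Finset Q} {c d : Q}
    (hc : c ∈ C) (h : Formula.Kf ({c} : Finset Q) d ∈ Γ) :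
    (Formula.Kf C d : Formula P Q) ∈ Γ := by
  have htr := thm_mem9 hΓ (provSL9 (SLKVF.tran C ({c} : Finset Q) d))
  have hconj : finConjKf P Q C ({c} : Finset Q) = Formula.and (Formula.Kf C c) Formula.top := by
    simp [finConjKf, Finset.sort_singleton, conj]
  rw [hconj] at htr
  have hproj := thm_mem9 hΓ (provSL9 (SLKVF.proj hc))
  exact mp_mem9 hΓ htr (and_mem9 hΓ (and_mem9 hΓ hproj (top_mem9 hΓ)) h)

lemma equ_mem9 {Γ : Set (Formula P Q)} (hΓ : MCS (AxMin P Q) Γ) {c d : Q}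
    (h : Formula.Kf ({c} : Finset Q) d ∈ Γ) :
    (Formula.Kf ({d} : Finset Q) c : Formula P Q) ∈ Γ := by
  have := thm_mem9 hΓ (Prov.ax (Or.inr (Or.inr ⟨c, d, rfl⟩)) :
    Prov (AxMin P Q) (equF P Q c d))
  exact mp_mem9 hΓ this h

end Helpers9

/- `u, v : Q/∼ → G` are encoded as maps `Q → G` that are constant on
`∼`-classes and injective between classes; `V_p(t,d) = t([d])` is then `t d`. -/
theorem statement9 (P Q G : Type) [Countable P] [Infinite P] [LinearOrder Q]
    (Γ : Set (Formula P Q)) (hΓ : MCS (AxMin P Q) Γ)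
    (u v : Q → G)
    (hu : ∀ c d : Q, u c = u d ↔ Formula.Kf ({c} : Finset Q) d ∈ Γ)
    (hv : ∀ c d : Q, v c = v d ↔ Formula.Kf ({c} : Finset Q) d ∈ Γ)
    (huv : ∀ c : Q, u c = v c ↔
      ∃ c' : Q, Formula.Kf ({c} : Finset Q) c' ∈ Γ ∧ Formula.Kv c' ∈ Γ) :
    (∀ d : Q, Formula.Kv d ∈ Γ → ∃ x : G, u d = x ∧ v d = x) ∧
    (∀ d : Q, Formula.Kv d ∉ Γ → u d ≠ v d) ∧
    (∀ (C : Finset Q) (d : Q), Formula.Kf C d ∈ Γ →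
      ∃ f : (Fin C.card → G) → G,
        (⟨C.card, f⟩ : Σ n : ℕ, (Fin n → G) → G) ∈ Fmin G ∧
        f (tupleV u C) = u d ∧ f (tupleV v C) = v d) ∧
    (∀ (C : Finset Q) (d : Q), Formula.Kf C d ∉ Γ →
      ∀ f : (Fin C.card → G) → G,
        (⟨C.card, f⟩ : Σ n : ℕ, (Fin n → G) → G) ∈ Fmin G →
          f (tupleV u C) ≠ u d ∨ f (tupleV v C) ≠ v d) := by
  refine ⟨?_, ?_, ?_, ?_⟩
  · -- (1)
    intro d hd
    have hdd : Formula.Kf ({d} : Finset Q) d ∈ Γ :=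
      thm_mem9 hΓ (provSL9 (SLKVF.proj (Finset.mem_singleton_self d)))
    have : u d = v d := (huv d).2 ⟨d, hdd, hd⟩
    exact ⟨u d, rfl, this.symm⟩
  · -- (2)
    intro d hd h
    rcases (huv d).1 h with ⟨c', hfc', hvc'⟩
    exact hd (kv_of9 hΓ hvc' (equ_mem9 hΓ hfc'))
  · -- (3)
    intro C d hCd
    have hchoo := thm_mem9 hΓ (Prov.ax (Or.inr (Or.inl ⟨C, d, rfl⟩)) :
      Prov (AxMin P Q) (chooF P Q C d))
    have hdisj := mp_mem9 hΓ hchoo hCd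
    rcases disj_mem9 hΓ _ hdisj with ⟨ψ, hψmem, hψΓ⟩
    rcases List.mem_map.1 hψmem with ⟨c, hc, rfl⟩
    rcases List.mem_iff_get.1 hc with ⟨n, hn⟩
    set k : Fin C.card := Fin.cast (Finset.length_sort (· ≤ ·)) n with hk
    refine ⟨fun x => x k, ⟨k, rfl⟩, ?_, ?_⟩ <;>
    · show _ = _
      have hcast : Fin.cast (Finset.length_sort (s := C) (· ≤ ·)).symm k = n := rfl
      simp only [tupleV, hcast, hn]
      first
      | exact (hu c d).2 hψΓ
      | exact (hv c d).2 hψΓ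
  · -- (4)
    intro C d hCd f hf
    rcases hf with ⟨k, hk⟩
    have hk' : f = fun x => x k := hk
    rw [hk']
    left
    show tupleV u C k ≠ u d
    set n := Fin.cast (Finset.length_sort (s := C) (· ≤ ·)).symm k with hn
    set c := (C.sort (· ≤ ·)).get n with hc
    have hcC : c ∈ C := Finset.mem_sort (· ≤ ·) |>.1 (List.get_mem _ _)
    have hnot : Formula.Kf ({c} : Finset Q) d ∉ Γ := fun h => hCd (kf_tran9 hΓ hcC h)
    intro heq
    exact hnot ((hu c d).1 heq)
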